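/- Let I = [t₁, t_∞] and let ζₙ : I → Iₙ = [tₙ, t_{n+1}] be contraction homeomorphisms onto the subintervals of a countable partition t₁ < t₂ < ⋯ with tₙ → t_∞. Let Φ, B ∈ C(I, K(ℝ)) satisfy B(t₁) − Φ(t₁) = B(t_∞) − Φ(t_∞), and let |α| < 1. Then the Read–Bajraktarević operator φ defined on C_Φ = {U ∈ C(I, K(ℝ)) : U(t₁) − B(t₁) = U(t_∞) − B(t_∞)} by (φU)(t) = Φ(t) + α[U(ζₙ⁻¹(t)) − B(ζₙ⁻¹(t))] for t ∈ Iₙ is a contraction with Lipschitz constant |α| with respect to the uniform metric induced by the Hausdorff metric. -/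

import Mathlib

open Set Metric Pointwise TopologicalSpace Filter EMetric
open scoped ENNReal NNReal

lemma haus_add_le (u s t : Set ℝ) :
    hausdorffEDist (u + s) (u + t) ≤ hausdorffEDist s t := by
  have key : ∀ s t : Set ℝ, ∀ x ∈ u + s, infEDist x (u + t) ≤ hausdorffEDist s t := by
    intro s t x hx
    rw [Set.mem_add] at hx
    obtain ⟨a, ha, b, hb, rfl⟩ := hx
    have h1 : infEDist (a + b) (u + t) ≤ infEDist b t := by
      have him : (fun y => a + y) '' t = {a} + t := by
        rw [Set.singleton_add]
      have hiso : Isometry (fun y : ℝ => a + y) :=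
        Isometry.of_dist_eq fun x y => by simp [Real.dist_eq, abs_sub_comm]
      calc infEDist (a + b) (u + t) ≤ infEDist (a + b) ({a} + t) :=
            infEDist_anti (Set.add_subset_add_right (Set.singleton_subset_iff.2 ha))
        _ = infEDist b t := by rw [← him, infEDist_image hiso]
    exact h1.trans (infEDist_le_hausdorffEDist_of_mem hb)
  refine hausdorffEDist_le_of_infEDist (key s t) (fun x hx => ?_)
  rw [hausdorffEDist_comm]
  exact key t s x hx

lemma haus_smul_le (α : ℝ) (s t : Set ℝ) (hs : s.Nonempty) (ht : t.Nonempty) :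
    hausdorffEDist (α • s) (α • t) ≤ (‖α‖₊ : ℝ≥0∞) * hausdorffEDist s t := by
  rcases eq_or_ne α 0 with rfl | hα
  · rw [Set.zero_smul_set hs, Set.zero_smul_set ht, hausdorffEDist_self]
    exact zero_le
  have key : ∀ s t : Set ℝ, ∀ x ∈ α • s, infEDist x (α • t) ≤ ‖α‖₊ * hausdorffEDist s t := by
    intro s t x hx
    obtain ⟨b, hb, rfl⟩ := hx
    rw [infEDist_smul₀ hα]
    exact mul_le_mul_right (infEDist_le_hausdorffEDist_of_mem hb) _
  refine hausdorffEDist_le_of_infEDist (key s t) (fun x hx => ?_)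
  rw [hausdorffEDist_comm]
  exact key t s x hx


/-- The Read–Bajraktarević operator of the countable fractal construction is a contraction
with Lipschitz constant `|α|` for the uniform metric induced by the Hausdorff metric.
Here `p n` is the partition point `t_{n+1}` of the paper (`p 0 = t₁ = a`, `T = t_∞`),
`ζ n` is the contraction homeomorphism of `I = [a, T]` onto `[p n, p (n+1)]`,
`ξ n` is its inverse, and `φU`, `φV` are the images of `U`, `V` under the RB operator. -/
theorem stmt_4
    (a T : ℝ) (haT : a < T)
    (p : ℕ → ℝ) (hp : StrictMono p) (hpa : p 0 = a)
    (hpT : Tendsto p atTop (nhds T))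
    (ζ ξ : ℕ → ℝ → ℝ) (c : ℕ → ℝ) (hc : ∀ n, c n < 1)
    (hζlip : ∀ n, ∀ x ∈ Icc a T, ∀ y ∈ Icc a T, |ζ n x - ζ n y| ≤ c n * |x - y|)
    (hζcont : ∀ n, ContinuousOn (ζ n) (Icc a T))
    (hζinj : ∀ n, InjOn (ζ n) (Icc a T))
    (hζim : ∀ n, ζ n '' Icc a T = Icc (p n) (p (n + 1)))
    (hζend : ∀ n, (ζ n a = p n ∧ ζ n T = p (n + 1)) ∨ (ζ n a = p (n + 1) ∧ ζ n T = p n))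
    (hξ : ∀ n, ∀ y ∈ Icc (p n) (p (n + 1)), ξ n y ∈ Icc a T ∧ ζ n (ξ n y) = y)
    (α : ℝ) (hα : |α| < 1)
    (Φ B : ℝ → NonemptyCompacts ℝ)
    (hΦ : ContinuousOn Φ (Icc a T)) (hB : ContinuousOn B (Icc a T))
    (hend : (B a : Set ℝ) - (Φ a : Set ℝ) = (B T : Set ℝ) - (Φ T : Set ℝ))
    (U V φU φV : ℝ → NonemptyCompacts ℝ)
    (hU : ContinuousOn U (Icc a T)) (hV : ContinuousOn V (Icc a T))
    (hUc : (U a : Set ℝ) - (B a : Set ℝ) = (U T : Set ℝ) - (B T : Set ℝ))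
    (hVc : (V a : Set ℝ) - (B a : Set ℝ) = (V T : Set ℝ) - (B T : Set ℝ))
    (hφU : ContinuousOn φU (Icc a T)) (hφV : ContinuousOn φV (Icc a T))
    (hφUeq : ∀ n, ∀ t ∈ Icc (p n) (p (n + 1)),
      (φU t : Set ℝ) = (Φ t : Set ℝ) + α • ((U (ξ n t) : Set ℝ) - (B (ξ n t) : Set ℝ)))
    (hφVeq : ∀ n, ∀ t ∈ Icc (p n) (p (n + 1)),
      (φV t : Set ℝ) = (Φ t : Set ℝ) + α • ((V (ξ n t) : Set ℝ) - (B (ξ n t) : Set ℝ))) :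
    ⨆ t : ↥(Icc a T), dist (φU ↑t) (φV ↑t) ≤ |α| * ⨆ t : ↥(Icc a T), dist (U ↑t) (V ↑t) := by
  have haT' : a ≤ T := haT.le
  haveI : Nonempty ↥(Icc a T) := ⟨⟨a, left_mem_Icc.2 haT'⟩⟩
  haveI : CompactSpace ↥(Icc a T) := isCompact_iff_compactSpace.1 isCompact_Icc
  set M := ⨆ t : ↥(Icc a T), dist (U ↑t) (V ↑t) with hM
  have hbdd : BddAbove (Set.range fun t : ↥(Icc a T) => dist (U ↑t) (V ↑t)) :=
    (isCompact_range ((hU.restrict.dist hV.restrict))).bddAbove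
  have hle_M : ∀ s ∈ Icc a T, dist (U s) (V s) ≤ M := fun s hs =>
    le_ciSup hbdd ⟨s, hs⟩
  have hM0 : 0 ≤ M := le_trans dist_nonneg (hle_M a (left_mem_Icc.2 haT'))
  have key : ∀ n, ∀ t ∈ Icc (p n) (p (n+1)), dist (φU t) (φV t) ≤ |α| * M := by
    intro n t ht
    obtain ⟨hsI, hζs⟩ := hξ n t ht
    set s := ξ n t with hs
    have hsubne : ∀ W : ℝ → NonemptyCompacts ℝ,
        ((W s : Set ℝ) - (B s : Set ℝ)).Nonempty := fun W =>
      (W s).nonempty.sub (B s).nonempty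
    have hsub : ∀ X : Set ℝ, X - (B s : Set ℝ) = (-(B s : Set ℝ)) + X := fun X => by
      rw [sub_eq_add_neg, add_comm]
    have hE : edist (φU t) (φV t) ≤ (‖α‖₊ : ℝ≥0∞) * edist (U s) (V s) := by
      calc edist (φU t) (φV t)
          = Metric.hausdorffEDist
              ((Φ t : Set ℝ) + α • ((U s : Set ℝ) - (B s : Set ℝ)))
              ((Φ t : Set ℝ) + α • ((V s : Set ℝ) - (B s : Set ℝ))) := by
            show Metric.hausdorffEDist ((φU t : Set ℝ)) ((φV t : Set ℝ)) = _
            rw [hφUeq n t ht, hφVeq n t ht]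
        _ ≤ Metric.hausdorffEDist (α • ((U s : Set ℝ) - (B s : Set ℝ)))
              (α • ((V s : Set ℝ) - (B s : Set ℝ))) := haus_add_le _ _ _
        _ ≤ ‖α‖₊ * Metric.hausdorffEDist ((U s : Set ℝ) - (B s : Set ℝ))
              ((V s : Set ℝ) - (B s : Set ℝ)) :=
            haus_smul_le α _ _ (hsubne U) (hsubne V)
        _ ≤ ‖α‖₊ * Metric.hausdorffEDist (U s : Set ℝ) (V s : Set ℝ) := by
            rw [hsub, hsub]
            exact mul_le_mul_right (haus_add_le _ _ _) _
        _ = ‖α‖₊ * edist (U s) (V s) := rfl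
    have hfin : (‖α‖₊ : ℝ≥0∞) * edist (U s) (V s) ≠ ⊤ :=
      ENNReal.mul_ne_top ENNReal.coe_ne_top (edist_ne_top _ _)
    calc dist (φU t) (φV t) = (edist (φU t) (φV t)).toReal := by rw [dist_edist]
      _ ≤ ((‖α‖₊ : ℝ≥0∞) * edist (U s) (V s)).toReal := ENNReal.toReal_mono hfin hE
      _ = |α| * dist (U s) (V s) := by
          rw [ENNReal.toReal_mul, ENNReal.coe_toReal, coe_nnnorm, Real.norm_eq_abs, dist_edist]
      _ ≤ |α| * M := mul_le_mul_of_nonneg_left (hle_M s hsI) (abs_nonneg α)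
  have hpa' : ∀ n, a ≤ p n := fun n => hpa ▸ hp.monotone (Nat.zero_le n)
  have hpnT : ∀ n, p n < T := fun n =>
    lt_of_lt_of_le (hp (Nat.lt_succ_self n)) (hp.monotone.ge_of_tendsto hpT (n+1))
  have hTbound : dist (φU T) (φV T) ≤ |α| * M := by
    have hcont : ContinuousOn (fun t => dist (φU t) (φV t)) (Icc a T) :=
      continuous_dist.comp_continuousOn (f := fun t => (φU t, φV t)) (hφU.prodMk hφV)
    have htend : Tendsto (fun n => dist (φU (p n)) (φV (p n))) atTop
        (nhds (dist (φU T) (φV T))) := by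
      have h1 : Tendsto p atTop (nhdsWithin T (Icc a T)) :=
        tendsto_nhdsWithin_of_tendsto_nhds_of_eventually_within _ hpT
          (Filter.Eventually.of_forall fun n => ⟨hpa' n, (hpnT n).le⟩)
      exact ((hcont T (right_mem_Icc.2 haT')).tendsto).comp h1
    exact le_of_tendsto htend (Filter.Eventually.of_forall fun n =>
      key n (p n) ⟨le_refl _, (hp (Nat.lt_succ_self n)).le⟩)
  refine ciSup_le fun t => ?_
  obtain ⟨t, ht⟩ := t
  rcases eq_or_lt_of_le ht.2 with rfl | hlt
  · exact hTbound
  · have hex : ∃ n, t < p n := by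
      by_contra h
      push_neg at h
      exact absurd (le_of_tendsto hpT (Filter.Eventually.of_forall h)) (not_le.2 hlt)
    have hn0 : Nat.find hex ≠ 0 := by
      intro h0
      have h1 := Nat.find_spec hex
      rw [h0, hpa] at h1
      exact absurd ht.1 (not_le.2 h1)
    obtain ⟨m, hm⟩ := Nat.exists_eq_succ_of_ne_zero hn0
    have h1 : p m ≤ t := not_lt.1 (Nat.find_min hex (by omega))
    have h2 : t ≤ p (m + 1) := by
      have := Nat.find_spec hex
      rw [hm] at this
      exact this.le
    exact key m t ⟨h1, h2⟩
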